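/- Let $B_{i,j}$ for $i=1,\ldots,n$, $j=1,\ldots,p$ be pairs of integer polyhedra in $\mathbb{R}^m$ with a common support cone and bounded symmetric differences. Let $B_{1,j}*\cdots*B_{n,j}$ be the componentwise prism over the pairs. Then the relative lattice-point count of the Minkowski sum of the prisms satisfies $I\big(\sum_{j=1}^p B_{1,j}*\cdots*B_{n,j}\big) = \sum_{a_1+\cdots+a_n = p,\ a_i \geq 0} I\Big(\bigvee_{J_1\sqcup\cdots\sqcup J_n = \{1,\ldots,p\},\ |J_i|=a_i} \sum_{i,\ j\in J_i} B_{i,j}\Big)$, where $\bigvee$ denotes the componentwise convex hull of unions of pairs, and $I(\Gamma,\Delta) = \#((\Gamma\setminus\Delta)\cap\mathbb{Z}) - \#((\Delta\setminus\Gamma)\cap\mathbb{Z})$. -/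

import Mathlib

open Pointwise

def dot {m : ℕ} (γ x : Fin m → ℝ) : ℝ := ∑ j, γ j * x j

def ι {m : ℕ} (x : Fin m → ℤ) : Fin m → ℝ := fun j => (x j : ℝ)

/-- An integer polyhedron with support cone `Γ`. -/
def IsLatticePolyhedron {m : ℕ} (Γ : Set (Fin m → ℝ)) (N : Set (Fin m → ℝ)) : Prop :=
  ∃ V : Finset (Fin m → ℤ), V.Nonempty ∧
    N = convexHull ℝ (ι '' (V : Set (Fin m → ℤ))) + {x | ∀ γ ∈ Γ, 0 ≤ dot γ x}

/-- Relative lattice point count in `ℝ^m`. -/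
noncomputable def Icount {m : ℕ} (AB : Set (Fin m → ℝ) × Set (Fin m → ℝ)) : ℤ :=
  (((AB.1 \ AB.2) ∩ Set.range (ι (m := m))).ncard : ℤ)
    - (((AB.2 \ AB.1) ∩ Set.range (ι (m := m))).ncard : ℤ)

/-- The lattice `ℤ^{n-1} ⊕ ℤ^m` in `ℝ^{n-1} ⊕ ℝ^m`. -/
def prodLattice (n' m : ℕ) : Set ((Fin n' → ℝ) × (Fin m → ℝ)) :=
  {z | (∃ u : Fin n' → ℤ, z.1 = ι u) ∧ (∃ v : Fin m → ℤ, z.2 = ι v)}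

/-- Relative lattice point count in `ℝ^{n-1} ⊕ ℝ^m`. -/
noncomputable def IcountProd {n' m : ℕ}
    (AB : Set ((Fin n' → ℝ) × (Fin m → ℝ)) × Set ((Fin n' → ℝ) × (Fin m → ℝ))) : ℤ :=
  (((AB.1 \ AB.2) ∩ prodLattice n' m).ncard : ℤ)
    - (((AB.2 \ AB.1) ∩ prodLattice n' m).ncard : ℤ)

/-- The vertices `b₁ = 0, b₂ = e₁, …, bₙ = e_{n-1}` of the standard simplex in `ℝ^{n-1}`. -/
def simpVert (n' : ℕ) : Fin (n' + 1) → (Fin n' → ℝ) :=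
  Fin.cases 0 (fun j => Pi.single j (1 : ℝ))

/-- The prism over `n` sets. -/
def prism {n' m : ℕ} (Δ : Fin (n' + 1) → Set (Fin m → ℝ)) :
    Set ((Fin n' → ℝ) × (Fin m → ℝ)) :=
  convexHull ℝ (⋃ i, ({simpVert n' i} : Set (Fin n' → ℝ)) ×ˢ Δ i)

/-- The componentwise prism over `n` pairs. -/
def prismPair {n' m : ℕ} (B : Fin (n' + 1) → Set (Fin m → ℝ) × Set (Fin m → ℝ)) :
    Set ((Fin n' → ℝ) × (Fin m → ℝ)) × Set ((Fin n' → ℝ) × (Fin m → ℝ)) :=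
  (prism (fun i => (B i).1), prism (fun i => (B i).2))


namespace L317

variable {m : ℕ}

def cone (Γ : Set (Fin m → ℝ)) : Set (Fin m → ℝ) := {x | ∀ γ ∈ Γ, 0 ≤ dot γ x}

lemma dot_add (γ x y : Fin m → ℝ) : dot γ (x + y) = dot γ x + dot γ y := by
  simp [dot, mul_add, Finset.sum_add_distrib]

lemma dot_smul (γ : Fin m → ℝ) (c : ℝ) (x : Fin m → ℝ) : dot γ (c • x) = c * dot γ x := by
  simp [dot, Finset.mul_sum]; apply Finset.sum_congr rfl; intros; ring

lemma zero_mem_cone (Γ : Set (Fin m → ℝ)) : (0 : Fin m → ℝ) ∈ cone Γ := by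
  intro γ _; simp [dot]

lemma add_mem_cone {Γ} {x y : Fin m → ℝ} (hx : x ∈ cone Γ) (hy : y ∈ cone Γ) :
    x + y ∈ cone Γ := by
  intro γ hγ; rw [dot_add]; exact add_nonneg (hx γ hγ) (hy γ hγ)

lemma smul_mem_cone {Γ} {c : ℝ} (hc : 0 ≤ c) {x : Fin m → ℝ} (hx : x ∈ cone Γ) :
    c • x ∈ cone Γ := by
  intro γ hγ; rw [dot_smul]; exact mul_nonneg hc (hx γ hγ)

lemma convex_cone (Γ : Set (Fin m → ℝ)) : Convex ℝ (cone Γ) := by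
  intro x hx y hy a b ha hb _
  exact add_mem_cone (smul_mem_cone ha hx) (smul_mem_cone hb hy)

lemma cone_add_cone (Γ : Set (Fin m → ℝ)) : cone Γ + cone Γ = cone Γ := by
  apply subset_antisymm
  · rintro z ⟨x, hx, y, hy, rfl⟩; exact add_mem_cone hx hy
  · intro x hx; exact ⟨x, hx, 0, zero_mem_cone Γ, by simp⟩

/-- A "structured" set: bounded nonempty convex set plus the cone. -/
def Str (Γ : Set (Fin m → ℝ)) (A : Set (Fin m → ℝ)) : Prop :=
  ∃ K : Set (Fin m → ℝ), Bornology.IsBounded K ∧ K.Nonempty ∧ Convex ℝ K ∧ A = K + cone Γ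

lemma ilp_str {Γ N : Set (Fin m → ℝ)} (h : IsLatticePolyhedron Γ N) :
    Str Γ N := by
  obtain ⟨V, hV, rfl⟩ := h
  refine ⟨convexHull ℝ (ι '' (V : Set (Fin m → ℤ))), ?_, ?_, convex_convexHull _ _, rfl⟩
  · exact isBounded_convexHull.mpr ((V.finite_toSet.image ι).isBounded)
  · exact (hV.to_set.image ι).mono (subset_convexHull _ _)

lemma Str.convex {Γ A : Set (Fin m → ℝ)} (h : Str Γ A) : Convex ℝ A := by
  obtain ⟨K, _, _, hc, rfl⟩ := h
  exact hc.add (convex_cone Γ)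

lemma Str.nonempty {Γ A : Set (Fin m → ℝ)} (h : Str Γ A) : A.Nonempty := by
  obtain ⟨K, _, ⟨k, hk⟩, _, rfl⟩ := h
  exact ⟨k + 0, Set.add_mem_add hk (zero_mem_cone Γ)⟩

lemma Str.add {Γ A A' : Set (Fin m → ℝ)} (h : Str Γ A) (h' : Str Γ A') : Str Γ (A + A') := by
  obtain ⟨K, hb, hne, hc, rfl⟩ := h
  obtain ⟨K', hb', hne', hc', rfl⟩ := h'
  refine ⟨K + K', hb.add hb', hne.add hne', hc.add hc', ?_⟩
  rw [add_add_add_comm, cone_add_cone]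

/-- `convexHull (K + C ∪ K' + C) = convexHull (K ∪ K') + C`. -/
lemma hull_union_add_cone (Γ : Set (Fin m → ℝ)) (K K' : Set (Fin m → ℝ)) :
    convexHull ℝ ((K + cone Γ) ∪ (K' + cone Γ)) = convexHull ℝ (K ∪ K') + cone Γ := by
  apply subset_antisymm
  · apply convexHull_min
    · apply Set.union_subset <;>
        exact Set.add_subset_add_right ((subset_convexHull _ _).trans
          (convexHull_mono (by simp [Set.subset_union_left, Set.subset_union_right])))
    · exact (convex_convexHull ℝ (K ∪ K')).add (convex_cone Γ)
  · calc convexHull ℝ (K ∪ K') + cone Γ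
        = convexHull ℝ (K ∪ K') + convexHull ℝ (cone Γ) := by
          rw [(convex_cone Γ).convexHull_eq]
      _ = convexHull ℝ ((K ∪ K') + cone Γ) := (convexHull_add _ _).symm
      _ ⊆ convexHull ℝ ((K + cone Γ) ∪ (K' + cone Γ)) := by
          apply convexHull_mono
          rw [Set.union_add]

lemma norm_add_lower (a b : Fin m → ℝ) : ‖b‖ - ‖a‖ ≤ ‖a + b‖ := by
  have : ‖b‖ ≤ ‖a + b‖ + ‖a‖ := by
    calc ‖b‖ = ‖(a + b) - a‖ := by congr 1; abel
      _ ≤ ‖a + b‖ + ‖a‖ := norm_sub_le _ _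
  linarith

/-- Far points of `A` are in `B` when the symmetric difference is small. -/
lemma far_mem {A B : Set (Fin m → ℝ)} {R : ℝ}
    (hsym : symmDiff A B ⊆ Metric.closedBall 0 R) {x : Fin m → ℝ}
    (hx : x ∈ A) (hfar : R < ‖x‖) : x ∈ B := by
  by_contra hB
  have : x ∈ symmDiff A B := by
    rw [Set.mem_symmDiff]; exact Or.inl ⟨hx, hB⟩
  have := hsym this
  rw [Metric.mem_closedBall, dist_zero_right] at this
  linarith

/-- Core of closure of bounded symmetric difference under Minkowski sums. -/
lemma add_diff_subset {Γ : Set (Fin m → ℝ)} {K K' L L' : Set (Fin m → ℝ)} {ρ R : ℝ}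
    (hK : K ⊆ Metric.closedBall 0 ρ) (hK' : K' ⊆ Metric.closedBall 0 ρ)
    (hAB : symmDiff (K + cone Γ) (L + cone Γ) ⊆ Metric.closedBall 0 R)
    (hAB' : symmDiff (K' + cone Γ) (L' + cone Γ) ⊆ Metric.closedBall 0 R) :
    ((K + cone Γ) + (K' + cone Γ)) \ ((L + cone Γ) + (L' + cone Γ))
      ⊆ Metric.closedBall 0 (2*R + 4*ρ + 4*|ρ| + 2*|R|) := by
  intro x hx
  obtain ⟨hxA, hxB⟩ := hx
  rw [Metric.mem_closedBall, dist_zero_right]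
  by_contra hfar
  push_neg at hfar
  apply hxB
  obtain ⟨y, hy, y', hy', rfl⟩ := hxA
  obtain ⟨k, hk, c, hc, rfl⟩ := hy
  obtain ⟨k', hk', c', hc', rfl⟩ := hy'
  have hfar' : 2*R + 4*ρ + 4*|ρ| + 2*|R| < ‖k + c + (k' + c')‖ := hfar
  have hkρ : ‖k‖ ≤ ρ := by simpa [dist_zero_right] using hK hk
  have hk'ρ : ‖k'‖ ≤ ρ := by simpa [dist_zero_right] using hK' hk'
  set h := (2⁻¹ : ℝ) • (c + c') with hh
  have hhC : h ∈ cone Γ := smul_mem_cone (by norm_num) (add_mem_cone hc hc')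
  have hcc : ‖k + c + (k' + c')‖ ≤ ‖c + c'‖ + ‖k‖ + ‖k'‖ := by
    calc ‖k + c + (k' + c')‖ = ‖(k + k') + (c + c')‖ := by congr 1; abel
      _ ≤ ‖k + k'‖ + ‖c + c'‖ := norm_add_le _ _
      _ ≤ (‖k‖ + ‖k'‖) + ‖c + c'‖ := by linarith [norm_add_le k k']
      _ = ‖c + c'‖ + ‖k‖ + ‖k'‖ := by ring
  have hnh : ‖h‖ = ‖c + c'‖ / 2 := by
    rw [hh, norm_smul]; simp; ring
  have hRa : R ≤ |R| := le_abs_self R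
  have hρa : ρ ≤ |ρ| := le_abs_self ρ
  have hρ0 : (0:ℝ) ≤ |ρ| := abs_nonneg ρ
  have hR0 : (0:ℝ) ≤ |R| := abs_nonneg R
  have hb1 : ‖h‖ - ‖k‖ ≤ ‖k + h‖ := norm_add_lower k h
  have hb2 : ‖h‖ - ‖k'‖ ≤ ‖k' + h‖ := norm_add_lower k' h
  have hk0 : (0:ℝ) ≤ ‖k‖ := norm_nonneg k
  have hk0' : (0:ℝ) ≤ ‖k'‖ := norm_nonneg k'
  have h1 : R < ‖k + h‖ := by rw [hnh] at hb1; linarith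
  have h2 : R < ‖k' + h‖ := by rw [hnh] at hb2; linarith
  have m1 : k + h ∈ L + cone Γ :=
    far_mem hAB (Set.add_mem_add hk hhC) h1
  have m2 : k' + h ∈ L' + cone Γ :=
    far_mem hAB' (Set.add_mem_add hk' hhC) h2
  have h2h : h + h = c + c' := by rw [hh]; module
  have key : (k + h) + (k' + h) = k + c + (k' + c') := by
    have e1 : (k + h) + (k' + h) = k + k' + (h + h) := by abel
    rw [e1, h2h]; abel
  show k + c + (k' + c') ∈ L + cone Γ + (L' + cone Γ)
  rw [← key]
  exact Set.add_mem_add m1 m2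

lemma hullUnion_diff_subset {Γ : Set (Fin m → ℝ)} {K K' L L' : Set (Fin m → ℝ)} {ρ R : ℝ}
    (hKc : Convex ℝ K) (hKc' : Convex ℝ K') (hKn : K.Nonempty) (hKn' : K'.Nonempty)
    (hK : K ⊆ Metric.closedBall 0 ρ) (hK' : K' ⊆ Metric.closedBall 0 ρ)
    (hAB : symmDiff (K + cone Γ) (L + cone Γ) ⊆ Metric.closedBall 0 R)
    (hAB' : symmDiff (K' + cone Γ) (L' + cone Γ) ⊆ Metric.closedBall 0 R) :
    convexHull ℝ ((K + cone Γ) ∪ (K' + cone Γ)) \ convexHull ℝ ((L + cone Γ) ∪ (L' + cone Γ))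
      ⊆ Metric.closedBall 0 (R + 2*ρ + 2*|ρ| + |R|) := by
  intro x hx
  obtain ⟨hxA, hxB⟩ := hx
  rw [Metric.mem_closedBall, dist_zero_right]
  by_contra hfar
  push_neg at hfar
  apply hxB
  rw [hull_union_add_cone] at hxA
  obtain ⟨z, hz, c, hc, rfl⟩ := hxA
  rw [(hKc.convexHull_union hKc' hKn hKn'), mem_convexJoin] at hz
  obtain ⟨k, hk, k', hk', hseg⟩ := hz
  obtain ⟨a, b, ha, hb, hab, rfl⟩ := hseg
  have hfar' : R + 2*ρ + 2*|ρ| + |R| < ‖a • k + b • k' + c‖ := hfar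
  have hkρ : ‖k‖ ≤ ρ := by simpa [dist_zero_right] using hK hk
  have hk'ρ : ‖k'‖ ≤ ρ := by simpa [dist_zero_right] using hK' hk'
  have hb1 : ‖a • k + b • k' + c‖ ≤ ‖a • k + b • k'‖ + ‖c‖ := norm_add_le _ _
  have hz : ‖a • k + b • k'‖ ≤ ρ := by
    calc ‖a • k + b • k'‖ ≤ ‖a • k‖ + ‖b • k'‖ := norm_add_le _ _
      _ = a * ‖k‖ + b * ‖k'‖ := by
          rw [norm_smul, norm_smul, Real.norm_eq_abs, Real.norm_eq_abs,
            abs_of_nonneg ha, abs_of_nonneg hb]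
      _ ≤ a * ρ + b * ρ := by
          have h0k : (0:ℝ) ≤ ‖k‖ := norm_nonneg k
          have h0k' : (0:ℝ) ≤ ‖k'‖ := norm_nonneg k'
          have : a * ‖k‖ ≤ a * ρ := mul_le_mul_of_nonneg_left hkρ ha
          have : b * ‖k'‖ ≤ b * ρ := mul_le_mul_of_nonneg_left hk'ρ hb
          nlinarith
      _ = ρ := by rw [← add_mul, hab, one_mul]
  have hc1 : R + ρ + 2*|ρ| + |R| < ‖c‖ := by linarith
  have hRa : R ≤ |R| := le_abs_self R
  have hρa : ρ ≤ |ρ| := le_abs_self ρ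
  have hρ0 : (0:ℝ) ≤ |ρ| := abs_nonneg ρ
  have hR0 : (0:ℝ) ≤ |R| := abs_nonneg R
  have hm1 : k + c ∈ L + cone Γ := by
    apply far_mem hAB (Set.add_mem_add hk hc)
    have := norm_add_lower k c
    linarith [norm_nonneg k]
  have hm2 : k' + c ∈ L' + cone Γ := by
    apply far_mem hAB' (Set.add_mem_add hk' hc)
    have := norm_add_lower k' c
    linarith [norm_nonneg k']
  have hkey : a • k + b • k' + c = a • (k + c) + b • (k' + c) := by
    have h2 : a • (k + c) + b • (k' + c) = a • k + b • k' + (a + b) • c := by module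
    rw [h2, hab, one_smul]
  show a • k + b • k' + c ∈ convexHull ℝ ((L + cone Γ) ∪ (L' + cone Γ))
  rw [hkey]
  have hcvx : Convex ℝ (convexHull ℝ ((L + cone Γ) ∪ (L' + cone Γ))) := convex_convexHull _ _
  exact hcvx (subset_convexHull _ _ (Set.mem_union_left _ hm1))
    (subset_convexHull _ _ (Set.mem_union_right _ hm2)) ha hb hab

/-- A pair with bounded symmetric difference. -/
def GPair (Γ : Set (Fin m → ℝ)) (A B : Set (Fin m → ℝ)) : Prop :=
  Str Γ A ∧ Str Γ B ∧ Bornology.IsBounded (symmDiff A B)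

lemma GPair.add {Γ} {A B A' B' : Set (Fin m → ℝ)} (h : GPair Γ A B) (h' : GPair Γ A' B') :
    GPair Γ (A + A') (B + B') := by
  obtain ⟨⟨K, hKb, hKn, hKc, rfl⟩, ⟨L, hLb, hLn, hLc, rfl⟩, hs⟩ := h
  obtain ⟨⟨K', hKb', hKn', hKc', rfl⟩, ⟨L', hLb', hLn', hLc', rfl⟩, hs'⟩ := h'
  refine ⟨Str.add ⟨K, hKb, hKn, hKc, rfl⟩ ⟨K', hKb', hKn', hKc', rfl⟩,
    Str.add ⟨L, hLb, hLn, hLc, rfl⟩ ⟨L', hLb', hLn', hLc', rfl⟩, ?_⟩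
  obtain ⟨ρ, hρ⟩ := (Metric.isBounded_iff_subset_closedBall 0).1
    (hKb.union (hKb'.union (hLb.union hLb')))
  obtain ⟨R, hR⟩ := (Metric.isBounded_iff_subset_closedBall 0).1 (hs.union hs')
  have hK : K ⊆ Metric.closedBall 0 ρ := (Set.subset_union_left).trans hρ
  have hK' : K' ⊆ Metric.closedBall 0 ρ :=
    ((Set.subset_union_left).trans Set.subset_union_right).trans hρ
  have hL : L ⊆ Metric.closedBall 0 ρ :=
    (((Set.subset_union_left).trans Set.subset_union_right).trans Set.subset_union_right).trans hρ
  have hL' : L' ⊆ Metric.closedBall 0 ρ :=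
    ((Set.subset_union_right.trans Set.subset_union_right).trans Set.subset_union_right).trans hρ
  have hsK : symmDiff (K + cone Γ) (L + cone Γ) ⊆ Metric.closedBall 0 R :=
    Set.subset_union_left.trans hR
  have hsK' : symmDiff (K' + cone Γ) (L' + cone Γ) ⊆ Metric.closedBall 0 R :=
    Set.subset_union_right.trans hR
  have d1 := add_diff_subset hK hK' hsK hsK'
  have d2 := add_diff_subset hL hL'
    (symmDiff_comm (K + cone Γ) (L + cone Γ) ▸ hsK)
    (symmDiff_comm (K' + cone Γ) (L' + cone Γ) ▸ hsK')
  apply Bornology.IsBounded.subset (Metric.isBounded_closedBall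
    (x := (0 : Fin m → ℝ)) (r := 2*R + 4*ρ + 4*|ρ| + 2*|R|))
  rw [Set.symmDiff_def]
  exact Set.union_subset d1 d2

lemma GPair.hullUnion {Γ} {A B A' B' : Set (Fin m → ℝ)} (h : GPair Γ A B) (h' : GPair Γ A' B') :
    GPair Γ (convexHull ℝ (A ∪ A')) (convexHull ℝ (B ∪ B')) := by
  obtain ⟨⟨K, hKb, hKn, hKc, rfl⟩, ⟨L, hLb, hLn, hLc, rfl⟩, hs⟩ := h
  obtain ⟨⟨K', hKb', hKn', hKc', rfl⟩, ⟨L', hLb', hLn', hLc', rfl⟩, hs'⟩ := h'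
  refine ⟨⟨convexHull ℝ (K ∪ K'), isBounded_convexHull.2 (hKb.union hKb'),
      hKn.mono ((Set.subset_union_left).trans (subset_convexHull _ _)),
      convex_convexHull _ _, hull_union_add_cone Γ K K'⟩,
    ⟨convexHull ℝ (L ∪ L'), isBounded_convexHull.2 (hLb.union hLb'),
      hLn.mono ((Set.subset_union_left).trans (subset_convexHull _ _)),
      convex_convexHull _ _, hull_union_add_cone Γ L L'⟩, ?_⟩
  obtain ⟨ρ, hρ⟩ := (Metric.isBounded_iff_subset_closedBall 0).1
    (hKb.union (hKb'.union (hLb.union hLb')))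
  obtain ⟨R, hR⟩ := (Metric.isBounded_iff_subset_closedBall 0).1 (hs.union hs')
  have hK : K ⊆ Metric.closedBall 0 ρ := (Set.subset_union_left).trans hρ
  have hK' : K' ⊆ Metric.closedBall 0 ρ :=
    ((Set.subset_union_left).trans Set.subset_union_right).trans hρ
  have hL : L ⊆ Metric.closedBall 0 ρ :=
    (((Set.subset_union_left).trans Set.subset_union_right).trans Set.subset_union_right).trans hρ
  have hL' : L' ⊆ Metric.closedBall 0 ρ :=
    ((Set.subset_union_right.trans Set.subset_union_right).trans Set.subset_union_right).trans hρ
  have hsK : symmDiff (K + cone Γ) (L + cone Γ) ⊆ Metric.closedBall 0 R :=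
    Set.subset_union_left.trans hR
  have hsK' : symmDiff (K' + cone Γ) (L' + cone Γ) ⊆ Metric.closedBall 0 R :=
    Set.subset_union_right.trans hR
  have d1 := hullUnion_diff_subset hKc hKc' hKn hKn' hK hK' hsK hsK'
  have d2 := hullUnion_diff_subset hLc hLc' hLn hLn' hL hL'
    (symmDiff_comm (K + cone Γ) (L + cone Γ) ▸ hsK)
    (symmDiff_comm (K' + cone Γ) (L' + cone Γ) ▸ hsK')
  apply Bornology.IsBounded.subset (Metric.isBounded_closedBall
    (x := (0 : Fin m → ℝ)) (r := R + 2*ρ + 2*|ρ| + |R|))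
  rw [Set.symmDiff_def]
  exact Set.union_subset d1 d2

lemma GPair.sum {Γ : Set (Fin m → ℝ)} {κ : Type*} (s : Finset κ) (hs : s.Nonempty)
    (f g : κ → Set (Fin m → ℝ)) (h : ∀ k ∈ s, GPair Γ (f k) (g k)) :
    GPair Γ (∑ k ∈ s, f k) (∑ k ∈ s, g k) := by
  induction hs using Finset.Nonempty.cons_induction with
  | singleton a => simpa using h a (by simp)
  | cons a s ha hs ih =>
    rw [Finset.sum_cons, Finset.sum_cons]
    exact (h a (by simp)).add (ih (fun k hk => h k (Finset.mem_cons_of_mem hk)))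

lemma GPair.hullBUnion {Γ : Set (Fin m → ℝ)} {κ : Type*} (s : Finset κ) (hs : s.Nonempty)
    (f g : κ → Set (Fin m → ℝ)) (h : ∀ k ∈ s, GPair Γ (f k) (g k)) :
    GPair Γ (convexHull ℝ (⋃ k ∈ s, f k)) (convexHull ℝ (⋃ k ∈ s, g k)) := by
  induction hs using Finset.Nonempty.cons_induction with
  | singleton a =>
    have h1 := h a (by simp)
    simpa [h1.1.convex.convexHull_eq, h1.2.1.convex.convexHull_eq] using h1
  | cons a s ha hs ih =>
    have e1 : ∀ (F : κ → Set (Fin m → ℝ)),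
        (⋃ k ∈ Finset.cons a s ha, F k) = F a ∪ ⋃ k ∈ s, F k := by
      classical
      intro F; rw [Finset.cons_eq_insert]; simp
    rw [e1, e1, ← convexHull_convexHull_union_right (f a), ← convexHull_convexHull_union_right (g a)]
    exact (h a (by simp)).hullUnion (ih (fun k hk => h k (Finset.mem_cons_of_mem hk)))

/-- Lattice points in a bounded set are finite. -/
lemma lattice_finite {S : Set (Fin m → ℝ)} (hS : Bornology.IsBounded S) :
    (S ∩ Set.range (ι (m := m))).Finite := by
  obtain ⟨r, hr⟩ := (Metric.isBounded_iff_subset_closedBall 0).1 hS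
  set N : ℤ := ⌈r⌉
  have : (S ∩ Set.range (ι (m := m))) ⊆
      ι '' ((Finset.Icc (fun _ => -N) (fun _ => N) : Finset (Fin m → ℤ)) : Set (Fin m → ℤ)) := by
    rintro x ⟨hxS, y, rfl⟩
    refine ⟨y, ?_, rfl⟩
    simp only [Finset.coe_Icc, Set.mem_Icc]
    have hnorm : ‖ι y‖ ≤ r := by simpa [dist_zero_right] using hr hxS
    have key : ∀ j, -N ≤ y j ∧ y j ≤ N := by
      intro j
      have h1 : |(y j : ℝ)| ≤ r := by
        calc |(y j : ℝ)| = ‖(ι y) j‖ := by simp [ι]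
          _ ≤ ‖ι y‖ := norm_le_pi_norm (ι y) j
          _ ≤ r := hnorm
      rw [abs_le] at h1
      constructor
      · have : -(N:ℝ) ≤ (y j : ℝ) := by
          have hc := Int.le_ceil r
          push_cast
          push_cast at hc
          linarith [h1.1]
        exact_mod_cast this
      · have : (y j : ℝ) ≤ (N:ℝ) := by
          have hc := Int.le_ceil r
          push_cast at hc ⊢
          linarith [h1.2]
        exact_mod_cast this
    exact ⟨fun j => (key j).1, fun j => (key j).2⟩
  · exact Set.Finite.subset (Set.Finite.image ι (Finset.finite_toSet _)) this

/-- Membership in the convex hull of a finite union of convex nonempty sets. -/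
lemma mem_hull_iUnion {E : Type*} [AddCommGroup E] [Module ℝ E] {n : ℕ} {s : Fin n → Set E}
    (hc : ∀ i, Convex ℝ (s i)) (hne : ∀ i, (s i).Nonempty) {x : E} :
    x ∈ convexHull ℝ (⋃ i, s i) ↔
      ∃ (t : Fin n → ℝ) (z : Fin n → E), (∀ i, 0 ≤ t i) ∧ ∑ i, t i = 1 ∧
        (∀ i, z i ∈ s i) ∧ x = ∑ i, t i • z i := by
  classical
  constructor
  · intro hx
    obtain ⟨κ, hκ, w, zz, hw0, hw1, hzz, hsum⟩ := mem_convexHull_iff_exists_fintype.1 hx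
    have hφ : ∀ k : κ, ∃ i, zz k ∈ s i := fun k => Set.mem_iUnion.1 (hzz k)
    choose φ hφm using hφ
    set t : Fin n → ℝ := fun i => ∑ k ∈ Finset.univ.filter (fun k => φ k = i), w k with ht
    have ht0 : ∀ i, 0 ≤ t i := fun i => Finset.sum_nonneg (fun k _ => hw0 k)
    have ht1 : ∑ i, t i = 1 := by
      rw [ht]
      rw [Finset.sum_fiberwise Finset.univ φ w]
      exact hw1
    set z : Fin n → E := fun i =>
      if h : t i = 0 then (hne i).some
      else (t i)⁻¹ • ∑ k ∈ Finset.univ.filter (fun k => φ k = i), w k • zz k with hz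
    have hzmem : ∀ i, z i ∈ s i := by
      intro i
      rw [hz]
      by_cases h : t i = 0
      · simp only [h, dif_pos]; exact (hne i).some_mem
      · simp only [h, dif_neg, not_false_iff]
        have hpos : 0 < ∑ k ∈ Finset.univ.filter (fun k => φ k = i), w k :=
          lt_of_le_of_ne (Finset.sum_nonneg (fun k _ => hw0 k)) (Ne.symm h)
        have := (hc i).centerMass_mem (t := Finset.univ.filter (fun k => φ k = i))
          (w := w) (z := zz) (fun k _ => hw0 k) hpos
          (fun k hk => by
            have : φ k = i := (Finset.mem_filter.1 hk).2
            exact this ▸ hφm k)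
        rwa [Finset.centerMass] at this
    refine ⟨t, z, ht0, ht1, hzmem, ?_⟩
    have key : ∀ i, t i • z i = ∑ k ∈ Finset.univ.filter (fun k => φ k = i), w k • zz k := by
      intro i
      rw [hz]
      by_cases h : t i = 0
      · simp only [h, dif_pos, zero_smul]
        symm
        apply Finset.sum_eq_zero
        intro k hk
        have hw : w k = 0 := by
          have := (Finset.sum_eq_zero_iff_of_nonneg (fun k _ => hw0 k)).1 h k hk
          exact this
        simp [hw]
      · simp only [h, dif_neg, not_false_iff, smul_smul]
        rw [mul_inv_cancel₀ h, one_smul]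
    calc x = ∑ k, w k • zz k := hsum.symm
      _ = ∑ i, ∑ k ∈ Finset.univ.filter (fun k => φ k = i), w k • zz k :=
        (Finset.sum_fiberwise Finset.univ φ (fun k => w k • zz k)).symm
      _ = ∑ i, t i • z i := by simp only [key]
  · rintro ⟨t, z, ht0, ht1, hzm, rfl⟩
    exact mem_convexHull_of_exists_fintype t z ht0 ht1
      (fun i => Set.mem_iUnion.2 ⟨i, hzm i⟩) rfl

/-- The easy direction of membership in a `Finset` sum of sets. -/
lemma sum_mem_finsetSum {α : Type*} [AddCommMonoid α] {κ : Type*} (s : Finset κ)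
    (f : κ → Set α) (g : κ → α) (h : ∀ k ∈ s, g k ∈ f k) : (∑ k ∈ s, g k) ∈ ∑ k ∈ s, f k :=
  (Set.mem_finset_sum s f _).2 ⟨g, fun {i} hi => h i hi, rfl⟩

lemma sigma_sum_const_div {p n : ℕ} (a : Fin n → ℕ) (e : Fin p ≃ (Σ i, Fin (a i)))
    (f : Fin n → ℝ) :
    ∑ k : Fin p, f (e k).1 = ∑ i, (a i : ℝ) * f i := by
  calc ∑ k : Fin p, f (e k).1
      = ∑ s : Σ i, Fin (a i), f s.1 := Fintype.sum_equiv e _ _ (fun k => rfl)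
    _ = ∑ i, ∑ _ : Fin (a i), f i := by
        rw [← Finset.univ_sigma_univ, Finset.sum_sigma]
    _ = ∑ i, (a i : ℝ) * f i := by
        apply Finset.sum_congr rfl
        intro i _
        rw [Finset.sum_const, Finset.card_univ, Fintype.card_fin, nsmul_eq_mul]

/-- Decomposition of a transportation matrix with row sums 1 and integer column sums. -/
lemma trans_decomp {p n : ℕ} (a : Fin n → ℕ) (e : Fin p ≃ (Σ i, Fin (a i)))
    (t : Fin p → Fin n → ℝ) (ht0 : ∀ j i, 0 ≤ t j i)
    (hrow : ∀ j, ∑ i, t j i = 1) (hcol : ∀ i, ∑ j, t j i = (a i : ℝ)) :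
    ∃ w : Equiv.Perm (Fin p) → ℝ, (∀ σ, 0 ≤ w σ) ∧ (∑ σ, w σ) = 1 ∧
      ∀ j i, t j i = ∑ σ, w σ * (if (e (σ j)).1 = i then 1 else 0) := by
  classical
  have hz : ∀ i, (a i : ℝ) = 0 → ∀ j, t j i = 0 := by
    intro i hai j
    have h0 : ∑ j, t j i = 0 := by rw [hcol i, hai]
    exact (Finset.sum_eq_zero_iff_of_nonneg (fun j _ => ht0 j i)).1 h0 j (Finset.mem_univ j)
  set M : Matrix (Fin p) (Fin p) ℝ := fun j k => t j (e k).1 / (a (e k).1 : ℝ) with hM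
  have hapos : ∀ k : Fin p, 0 < a (e k).1 := fun k => (e k).2.pos
  have hMmem : M ∈ doublyStochastic ℝ (Fin p) := by
    rw [mem_doublyStochastic_iff_sum]
    refine ⟨fun j k => div_nonneg (ht0 _ _) (Nat.cast_nonneg _), fun j => ?_, fun k => ?_⟩
    · rw [hM]
      calc ∑ k : Fin p, t j (e k).1 / (a (e k).1 : ℝ)
          = ∑ i, (a i : ℝ) * (t j i / (a i : ℝ)) :=
            sigma_sum_const_div a e (fun i => t j i / (a i : ℝ))
        _ = ∑ i, t j i := by
            apply Finset.sum_congr rfl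
            intro i _
            by_cases h : (a i : ℝ) = 0
            · rw [h, zero_mul, hz i h j]
            · field_simp
        _ = 1 := hrow j
    · rw [hM]
      have : ∑ j, t j (e k).1 / (a (e k).1 : ℝ) = (∑ j, t j (e k).1) / (a (e k).1 : ℝ) :=
        (Finset.sum_div _ _ _).symm
      rw [this, hcol]
      exact div_self (by exact_mod_cast (hapos k).ne')
  obtain ⟨w, hw0, hw1, hwM⟩ := exists_eq_sum_perm_of_mem_doublyStochastic hMmem
  refine ⟨w, hw0, hw1, fun j i => ?_⟩
  have key : ∑ k : Fin p, (if (e k).1 = i then M j k else 0) = t j i := by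
    rw [hM]
    calc ∑ k : Fin p, (if (e k).1 = i then t j (e k).1 / (a (e k).1 : ℝ) else 0)
        = ∑ i', (a i' : ℝ) * (if i' = i then t j i' / (a i' : ℝ) else 0) :=
          sigma_sum_const_div a e (fun i' => if i' = i then t j i' / (a i' : ℝ) else 0)
      _ = t j i := by
          rw [Finset.sum_eq_single i]
          · by_cases h : (a i : ℝ) = 0
            · simp [h, hz i h j]
            · rw [if_pos rfl]; field_simp
          · intro i' _ hne; simp [hne]
          · intro h; exact absurd (Finset.mem_univ i) h
  rw [← key]
  have hMs : ∀ k, M j k = ∑ σ : Equiv.Perm (Fin p), w σ * (if σ j = k then 1 else 0) := by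
    intro k
    rw [← hwM]
    rw [Matrix.sum_apply]
    apply Finset.sum_congr rfl
    intro σ _
    rw [Matrix.smul_apply, smul_eq_mul]
    congr 1
    by_cases h : σ j = k
    · simp [Equiv.Perm.permMatrix, PEquiv.toMatrix_apply, Equiv.toPEquiv_apply,
        Option.mem_def, h]
    · simp [Equiv.Perm.permMatrix, PEquiv.toMatrix_apply, Equiv.toPEquiv_apply,
        Option.mem_def, h, Ne.symm h]
  calc ∑ k : Fin p, (if (e k).1 = i then M j k else 0)
      = ∑ k : Fin p, (if (e k).1 = i then
          (∑ σ : Equiv.Perm (Fin p), w σ * (if σ j = k then 1 else 0)) else 0) := by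
        apply Finset.sum_congr rfl; intro k _; rw [hMs k]
    _ = ∑ σ : Equiv.Perm (Fin p), ∑ k : Fin p,
          (if (e k).1 = i then w σ * (if σ j = k then 1 else 0) else 0) := by
        rw [Finset.sum_comm]
        apply Finset.sum_congr rfl; intro k _
        by_cases h : (e k).1 = i
        · simp [h]
        · simp [h]
    _ = ∑ σ : Equiv.Perm (Fin p), w σ * (if (e (σ j)).1 = i then 1 else 0) := by
        apply Finset.sum_congr rfl
        intro σ _
        rw [Finset.sum_eq_single (σ j)]
        · by_cases h : (e (σ j)).1 = i <;> simp [h]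
        · intro k _ hk
          by_cases h : (e k).1 = i <;> simp [h, Ne.symm hk]
        · intro h; exact absurd (Finset.mem_univ (σ j)) h

lemma simpVert_apply (n' : ℕ) (i : Fin (n' + 1)) (l : Fin n') :
    simpVert n' i l = if i = l.succ then 1 else 0 := by
  induction i using Fin.cases with
  | zero =>
    have : (0 : Fin (n' + 1)) ≠ l.succ := (Fin.succ_ne_zero l).symm
    simp [simpVert, this]
  | succ k =>
    simp only [simpVert, Fin.cases_succ]
    rw [Pi.single_apply]
    by_cases h : k = l
    · simp [h]
    · have : k.succ ≠ l.succ := by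
        intro hc; exact h (Fin.succ_injective _ hc)
      simp [h, this, Ne.symm h]

lemma mem_prism_iff {n' m : ℕ} {Δ : Fin (n' + 1) → Set (Fin m → ℝ)}
    (hc : ∀ i, Convex ℝ (Δ i)) (hne : ∀ i, (Δ i).Nonempty) {u : Fin n' → ℝ} {v : Fin m → ℝ} :
    (u, v) ∈ prism Δ ↔
      ∃ (t : Fin (n' + 1) → ℝ) (x : Fin (n' + 1) → Fin m → ℝ),
        (∀ i, 0 ≤ t i) ∧ ∑ i, t i = 1 ∧ (∀ i, x i ∈ Δ i) ∧
        u = ∑ i, t i • simpVert n' i ∧ v = ∑ i, t i • x i := by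
  rw [prism, mem_hull_iUnion (s := fun i => ({simpVert n' i} : Set (Fin n' → ℝ)) ×ˢ Δ i)
    (fun i => (convex_singleton _).prod (hc i))
    (fun i => (Set.singleton_nonempty _).prod (hne i))]
  constructor
  · rintro ⟨t, z, ht0, ht1, hzm, hx⟩
    refine ⟨t, fun i => (z i).2, ht0, ht1, fun i => (hzm i).2, ?_, ?_⟩
    · have : u = (∑ i, t i • z i).1 := by rw [← hx]
      rw [this, Prod.fst_sum]
      apply Finset.sum_congr rfl
      intro i _
      rw [Prod.smul_fst, (hzm i).1]
    · have : v = (∑ i, t i • z i).2 := by rw [← hx]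
      rw [this, Prod.snd_sum]
      apply Finset.sum_congr rfl
      intro i _
      rw [Prod.smul_snd]
  · rintro ⟨t, x, ht0, ht1, hxm, hu, hv⟩
    refine ⟨t, fun i => (simpVert n' i, x i), ht0, ht1,
      fun i => ⟨rfl, hxm i⟩, ?_⟩
    rw [Prod.ext_iff]
    constructor
    · rw [Prod.fst_sum]; simpa using hu
    · rw [Prod.snd_sum]; simpa using hv

lemma card_filter_fiber {p n : ℕ} (a : Fin n → ℕ) (e : Fin p ≃ (Σ i, Fin (a i)))
    (σ : Equiv.Perm (Fin p)) (i : Fin n) :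
    (Finset.univ.filter (fun j => (e (σ j)).1 = i)).card = a i := by
  classical
  rw [Finset.card_filter]
  have : ∑ j : Fin p, (if (e (σ j)).1 = i then 1 else 0)
      = ∑ s : Σ i', Fin (a i'), (if s.1 = i then 1 else 0) :=
    Fintype.sum_equiv (σ.trans e) _ _ (fun j => rfl)
  rw [this, ← Finset.univ_sigma_univ, Finset.sum_sigma]
  calc ∑ i', ∑ _ : Fin (a i'), (if i' = i then 1 else 0)
      = ∑ i', (if i' = i then a i' else 0) := by
        apply Finset.sum_congr rfl
        intro i' _
        by_cases h : i' = i <;> simp [h]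
    _ = a i := by rw [Finset.sum_ite_eq' Finset.univ i (fun i' => a i')]; simp

lemma convex_finsetSum {E : Type*} [AddCommGroup E] [Module ℝ E] {κ : Type*} (s : Finset κ)
    (f : κ → Set E) (h : ∀ k ∈ s, Convex ℝ (f k)) : Convex ℝ (∑ k ∈ s, f k) := by
  classical
  induction s using Finset.induction with
  | empty =>
    rw [Finset.sum_empty, ← Set.singleton_zero]
    exact convex_singleton 0
  | insert _ _ hk ih =>
    rw [Finset.sum_insert hk]
    exact (h _ (Finset.mem_insert_self _ _)).add
      (ih (fun k hks => h k (Finset.mem_insert_of_mem hks)))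

/-- The slice lemma: membership in a sum of prisms at a given integer height. -/
theorem slice_iff {n' m p : ℕ} (Δ : Fin (n' + 1) → Fin p → Set (Fin m → ℝ))
    (hconv : ∀ i j, Convex ℝ (Δ i j)) (hnemp : ∀ i j, (Δ i j).Nonempty)
    (a : Fin (n' + 1) → ℕ) (ha : ∑ i, a i = p)
    (u : Fin n' → ℝ) (hu : ∀ l, u l = (a l.succ : ℝ)) (v : Fin m → ℝ) :
    (u, v) ∈ ∑ j : Fin p, prism (fun i => Δ i j) ↔
      v ∈ convexHull ℝ (⋃ J ∈ {J : Fin (n' + 1) → Finset (Fin p) |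
          (Pairwise fun i i' => Disjoint (J i) (J i')) ∧
          (∀ j₀ : Fin p, ∃ i, j₀ ∈ J i) ∧ (∀ i, (J i).card = a i)},
        ∑ i, ∑ j ∈ J i, Δ i j) := by
  classical
  have hcards : Fintype.card (Fin p) = Fintype.card (Σ i, Fin (a i)) := by
    rw [Fintype.card_fin, Fintype.card_sigma]
    simp [ha]
  set e : Fin p ≃ (Σ i, Fin (a i)) := Fintype.equivOfCardEq hcards with he
  constructor
  · -- forward
    intro hX
    obtain ⟨g, hg, hsum⟩ := (Set.mem_finset_sum Finset.univ
      (fun j => prism (fun i => Δ i j)) _).1 hX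
    have hgj : ∀ j, ((g j).1, (g j).2) ∈ prism (fun i => Δ i j) := by
      intro j; rw [Prod.mk.eta]; exact hg (Finset.mem_univ j)
    have hdec := fun j => (mem_prism_iff (fun i => hconv i j) (fun i => hnemp i j)).1 (hgj j)
    choose t x ht0 ht1 hxm hgu hgv using hdec
    have hufst : u = ∑ j, (g j).1 := by
      have : (∑ j, g j).1 = u := by rw [hsum]
      rw [← this, Prod.fst_sum]
    have hvsnd : v = ∑ j, (g j).2 := by
      have : (∑ j, g j).2 = v := by rw [hsum]
      rw [← this, Prod.snd_sum]
    -- column sums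
    have hcolsucc : ∀ l : Fin n', ∑ j, t j l.succ = u l := by
      intro l
      rw [hufst]
      have : ∀ j : Fin p, (g j).1 l = t j l.succ := by
        intro j
        rw [hgu j]
        rw [Finset.sum_apply]
        have : ∀ i, (t j i • simpVert n' i) l = if i = l.succ then t j i else 0 := by
          intro i
          rw [Pi.smul_apply, simpVert_apply, smul_eq_mul]
          by_cases h : i = l.succ <;> simp [h]
        rw [Finset.sum_congr rfl (fun i _ => this i)]
        rw [Finset.sum_ite_eq' Finset.univ l.succ (fun i => t j i)]
        simp
      rw [Finset.sum_apply]
      exact Finset.sum_congr rfl (fun j _ => (this j).symm)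
    have hcol : ∀ i, ∑ j, t j i = (a i : ℝ) := by
      intro i
      induction i using Fin.cases with
      | succ l => rw [hcolsucc l, hu l]
      | zero =>
        have hsum1 : ∑ j : Fin p, ∑ i, t j i = (p : ℝ) := by
          rw [Finset.sum_congr rfl (fun j _ => ht1 j)]; simp
        have hsplit : ∑ j : Fin p, ∑ i, t j i
            = ∑ j, t j 0 + ∑ l : Fin n', ∑ j, t j l.succ := by
          have h1 : ∀ j : Fin p, ∑ i, t j i = t j 0 + ∑ l : Fin n', t j l.succ :=
            fun j => Fin.sum_univ_succ (fun i => t j i)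
          rw [Finset.sum_congr rfl (fun j _ => h1 j), Finset.sum_add_distrib,
            Finset.sum_comm]
        have hcast : (p : ℝ) = (a 0 : ℝ) + ∑ l : Fin n', (a l.succ : ℝ) := by
          rw [← ha]
          push_cast
          rw [Fin.sum_univ_succ]
        have husum : ∑ l : Fin n', ∑ j, t j l.succ = ∑ l : Fin n', (a l.succ : ℝ) := by
          apply Finset.sum_congr rfl
          intro l _
          rw [hcolsucc l, hu l]
        rw [husum] at hsplit
        rw [hsum1, hcast] at hsplit
        linarith [hsplit]
    obtain ⟨w, hw0, hw1, hwt⟩ := trans_decomp a e t ht0 ht1 hcol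
    set y : Equiv.Perm (Fin p) → (Fin m → ℝ) := fun σ => ∑ j, x j ((e (σ j)).1) with hy
    have hinner : ∀ (σ : Equiv.Perm (Fin p)) (j : Fin p),
        ∑ i, (w σ * (if (e (σ j)).1 = i then 1 else 0)) • x j i
          = w σ • x j ((e (σ j)).1) := by
      intro σ j
      rw [Finset.sum_eq_single ((e (σ j)).1)]
      · rw [if_pos rfl, mul_one]
      · intro i _ hne
        rw [if_neg (Ne.symm hne), mul_zero, zero_smul]
      · intro h; exact absurd (Finset.mem_univ _) h
    have hveq : v = ∑ σ, w σ • y σ := by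
      calc v = ∑ j, (g j).2 := hvsnd
        _ = ∑ j, ∑ i, t j i • x j i := Finset.sum_congr rfl (fun j _ => hgv j)
        _ = ∑ j, ∑ i, ∑ σ, (w σ * (if (e (σ j)).1 = i then 1 else 0)) • x j i := by
            apply Finset.sum_congr rfl; intro j _
            apply Finset.sum_congr rfl; intro i _
            rw [hwt j i, Finset.sum_smul]
        _ = ∑ j, ∑ σ, ∑ i, (w σ * (if (e (σ j)).1 = i then 1 else 0)) • x j i := by
            apply Finset.sum_congr rfl; intro j _
            exact Finset.sum_comm
        _ = ∑ σ, ∑ j, ∑ i, (w σ * (if (e (σ j)).1 = i then 1 else 0)) • x j i :=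
            Finset.sum_comm
        _ = ∑ σ, w σ • y σ := by
            apply Finset.sum_congr rfl; intro σ _
            rw [Finset.sum_congr rfl (fun j _ => hinner σ j)]
            simp only [hy]
            exact (Finset.smul_sum).symm
    have hymem : ∀ σ : Equiv.Perm (Fin p),
        y σ ∈ ⋃ J ∈ {J : Fin (n' + 1) → Finset (Fin p) |
          (Pairwise fun i i' => Disjoint (J i) (J i')) ∧
          (∀ j₀ : Fin p, ∃ i, j₀ ∈ J i) ∧ (∀ i, (J i).card = a i)},
        ∑ i, ∑ j ∈ J i, Δ i j := by
      intro σ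
      set J : Fin (n' + 1) → Finset (Fin p) :=
        fun i => Finset.univ.filter (fun j => (e (σ j)).1 = i) with hJ
      have hJmem : J ∈ {J : Fin (n' + 1) → Finset (Fin p) |
          (Pairwise fun i i' => Disjoint (J i) (J i')) ∧
          (∀ j₀ : Fin p, ∃ i, j₀ ∈ J i) ∧ (∀ i, (J i).card = a i)} := by
        refine ⟨fun i i' hne => ?_, fun j₀ => ⟨(e (σ j₀)).1, by simp [hJ]⟩,
          fun i => card_filter_fiber a e σ i⟩
        show Disjoint (J i) (J i')
        rw [Finset.disjoint_left]
        intro j hj hj'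
        rw [hJ] at hj hj'
        simp only [Finset.mem_filter] at hj hj'
        exact hne (hj.2.symm.trans hj'.2)
      have hyeq : y σ = ∑ i, ∑ j ∈ J i, x j i := by
        show (∑ j, x j ((e (σ j)).1)) = _
        rw [← Finset.sum_fiberwise Finset.univ (fun j => (e (σ j)).1)
          (fun j => x j ((e (σ j)).1))]
        apply Finset.sum_congr rfl
        intro i _
        apply Finset.sum_congr rfl
        intro j hj
        simp only [Finset.mem_filter] at hj
        rw [hj.2]
      rw [hyeq]
      exact Set.mem_biUnion hJmem
        (sum_mem_finsetSum _ _ _ (fun i _ =>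
          sum_mem_finsetSum _ _ _ (fun j hj => hxm j i)))
    exact mem_convexHull_of_exists_fintype w y hw0 hw1 hymem hveq.symm
  · -- backward
    intro hv
    have hXconv : Convex ℝ (∑ j : Fin p, prism (fun i => Δ i j)) :=
      convex_finsetSum _ _ (fun j _ => convex_convexHull ℝ _)
    have hslice : Convex ℝ {v' : Fin m → ℝ | (u, v') ∈ ∑ j : Fin p, prism (fun i => Δ i j)} := by
      intro v1 h1 v2 h2 α β hα hβ hαβ
      have e1 : α • ((u : Fin n' → ℝ), v1) + β • ((u : Fin n' → ℝ), v2)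
          = (u, α • v1 + β • v2) := by
        rw [Prod.smul_mk, Prod.smul_mk, Prod.mk_add_mk, ← add_smul, hαβ, one_smul]
      have hmem := hXconv h1 h2 hα hβ hαβ
      rw [e1] at hmem
      exact hmem
    have hsub : (⋃ J ∈ {J : Fin (n' + 1) → Finset (Fin p) |
          (Pairwise fun i i' => Disjoint (J i) (J i')) ∧
          (∀ j₀ : Fin p, ∃ i, j₀ ∈ J i) ∧ (∀ i, (J i).card = a i)},
        ∑ i, ∑ j ∈ J i, Δ i j)
        ⊆ {v' : Fin m → ℝ | (u, v') ∈ ∑ j : Fin p, prism (fun i => Δ i j)} := by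
      intro v' hv'
      obtain ⟨J, hJ, hvJ⟩ := Set.mem_iUnion₂.1 hv'
      obtain ⟨hdisj, hcov, hcard⟩ := hJ
      obtain ⟨G, hG, hGsum⟩ := (Set.mem_finset_sum Finset.univ
        (fun i => ∑ j ∈ J i, Δ i j) v').1 hvJ
      have hGi : ∀ i, ∃ xx : Fin p → (Fin m → ℝ),
          (∀ j ∈ J i, xx j ∈ Δ i j) ∧ ∑ j ∈ J i, xx j = G i := by
        intro i
        obtain ⟨xx, hxx, hxsum⟩ := (Set.mem_finset_sum (J i) (fun j => Δ i j) (G i)).1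
          (hG (Finset.mem_univ i))
        exact ⟨xx, fun j hj => hxx hj, hxsum⟩
      choose xx hxx1 hxx2 using hGi
      choose iof hiof using hcov
      have huniq : ∀ {j i}, j ∈ J i → iof j = i := by
        intro j i hj
        by_contra hne
        exact (Finset.disjoint_left.1 (hdisj hne)) (hiof j) hj
      have hfilter : ∀ i, Finset.univ.filter (fun j => iof j = i) = J i := by
        intro i
        ext j
        simp only [Finset.mem_filter, Finset.mem_univ, true_and]
        constructor
        · rintro rfl; exact hiof j
        · exact huniq
      set q : Fin p → (Fin n' → ℝ) × (Fin m → ℝ) :=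
        fun j => (simpVert n' (iof j), xx (iof j) j) with hq
      have hqmem : ∀ j : Fin p, q j ∈ prism (fun i => Δ i j) := by
        intro j
        apply subset_convexHull ℝ _
        exact Set.mem_iUnion.2 ⟨iof j, ⟨rfl, hxx1 (iof j) j (hiof j)⟩⟩
      have hqsum : (u, v') = ∑ j, q j := by
        rw [Prod.ext_iff]
        constructor
        · show u = (∑ j, q j).1
          rw [Prod.fst_sum]
          funext l
          rw [Finset.sum_apply]
          have : ∀ j : Fin p, (q j).1 l = if iof j = l.succ then (1:ℝ) else 0 := by
            intro j
            show simpVert n' (iof j) l = _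
            exact simpVert_apply n' (iof j) l
          rw [Finset.sum_congr rfl (fun j _ => this j), Finset.sum_boole, hfilter,
            hcard, hu]
        · show v' = (∑ j, q j).2
          rw [Prod.snd_sum]
          have : ∑ j, (q j).2 = ∑ i, ∑ j ∈ Finset.univ.filter (fun j => iof j = i),
              xx (iof j) j :=
            (Finset.sum_fiberwise Finset.univ iof (fun j => xx (iof j) j)).symm
          rw [this]
          have : ∀ i, ∑ j ∈ Finset.univ.filter (fun j => iof j = i), xx (iof j) j
              = G i := by
            intro i
            rw [← hxx2 i, hfilter i]
            apply Finset.sum_congr rfl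
            intro j hj
            rw [huniq hj]
          rw [Finset.sum_congr rfl (fun i _ => this i), hGsum]
      show (u, v') ∈ ∑ j : Fin p, prism (fun i => Δ i j)
      rw [hqsum]
      exact sum_mem_finsetSum _ _ _ (fun j _ => hqmem j)
    exact convexHull_min hsub hslice hv

/-- Heights of points of a sum of prisms that are lattice points. -/
lemma height_exists {n' m p : ℕ} (Δ : Fin (n' + 1) → Fin p → Set (Fin m → ℝ))
    (hconv : ∀ i j, Convex ℝ (Δ i j)) (hnemp : ∀ i j, (Δ i j).Nonempty)
    {u : Fin n' → ℝ} {v : Fin m → ℝ} (hX : (u, v) ∈ ∑ j : Fin p, prism (fun i => Δ i j))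
    (c : Fin n' → ℤ) (hc : u = ι c) :
    ∃ a ∈ Finset.Nat.antidiagonalTuple (n' + 1) p, ∀ l, u l = ((a l.succ : ℕ) : ℝ) := by
  classical
  obtain ⟨g, hg, hsum⟩ := (Set.mem_finset_sum Finset.univ
    (fun j => prism (fun i => Δ i j)) _).1 hX
  have hgj : ∀ j, ((g j).1, (g j).2) ∈ prism (fun i => Δ i j) := by
    intro j; rw [Prod.mk.eta]; exact hg (Finset.mem_univ j)
  have hdec := fun j => (mem_prism_iff (fun i => hconv i j) (fun i => hnemp i j)).1 (hgj j)
  choose t x ht0 ht1 hxm hgu hgv using hdec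
  have hufst : u = ∑ j, (g j).1 := by
    have : (∑ j, g j).1 = u := by rw [hsum]
    rw [← this, Prod.fst_sum]
  have hcolsucc : ∀ l : Fin n', ∑ j, t j l.succ = u l := by
    intro l
    rw [hufst]
    have key : ∀ j : Fin p, (g j).1 l = t j l.succ := by
      intro j
      rw [hgu j]
      rw [Finset.sum_apply]
      have : ∀ i, (t j i • simpVert n' i) l = if i = l.succ then t j i else 0 := by
        intro i
        rw [Pi.smul_apply, simpVert_apply, smul_eq_mul]
        by_cases h : i = l.succ <;> simp [h]
      rw [Finset.sum_congr rfl (fun i _ => this i)]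
      rw [Finset.sum_ite_eq' Finset.univ l.succ (fun i => t j i)]
      simp
    rw [Finset.sum_apply]
    exact Finset.sum_congr rfl (fun j _ => (key j).symm)
  have hunonneg : ∀ l, 0 ≤ u l := by
    intro l
    rw [← hcolsucc l]
    exact Finset.sum_nonneg (fun j _ => ht0 j _)
  have husum : ∑ l, u l ≤ (p : ℝ) := by
    have h1 : ∑ l : Fin n', ∑ j, t j l.succ = ∑ j : Fin p, ∑ l : Fin n', t j l.succ :=
      Finset.sum_comm
    have h2 : ∀ j : Fin p, ∑ l : Fin n', t j l.succ ≤ 1 := by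
      intro j
      have := Fin.sum_univ_succ (fun i => t j i)
      rw [ht1 j] at this
      have h0 : 0 ≤ t j 0 := ht0 j 0
      linarith
    calc ∑ l, u l = ∑ l : Fin n', ∑ j, t j l.succ :=
          Finset.sum_congr rfl (fun l _ => (hcolsucc l).symm)
      _ = ∑ j : Fin p, ∑ l : Fin n', t j l.succ := h1
      _ ≤ ∑ j : Fin p, (1:ℝ) := Finset.sum_le_sum (fun j _ => h2 j)
      _ = (p : ℝ) := by simp
  have hcnonneg : ∀ l, 0 ≤ c l := by
    intro l
    have h := hunonneg l
    rw [hc] at h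
    have h2 : (0:ℝ) ≤ ((c l : ℤ) : ℝ) := h
    exact_mod_cast h2
  have hS : ∑ l, (c l).toNat ≤ p := by
    have : ((∑ l, (c l).toNat : ℕ) : ℝ) ≤ (p : ℝ) := by
      push_cast
      calc ∑ l : Fin n', (((c l).toNat : ℤ) : ℝ)
          = ∑ l, u l := by
            apply Finset.sum_congr rfl
            intro l _
            rw [Int.toNat_of_nonneg (hcnonneg l), hc]
            rfl
        _ ≤ (p : ℝ) := husum
    exact_mod_cast this
  refine ⟨Fin.cases (p - ∑ l, (c l).toNat) (fun l => (c l).toNat), ?_, ?_⟩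
  · rw [Finset.Nat.mem_antidiagonalTuple]
    rw [Fin.sum_univ_succ]
    simp only [Fin.cases_zero, Fin.cases_succ]
    omega
  · intro l
    simp only [Fin.cases_succ]
    rw [hc]
    show ((c l : ℤ) : ℝ) = (((c l).toNat : ℕ) : ℝ)
    norm_cast
    exact (Int.toNat_of_nonneg (hcnonneg l)).symm

lemma height_unique {n' p : ℕ} {a a' : Fin (n' + 1) → ℕ}
    (ha : a ∈ Finset.Nat.antidiagonalTuple (n' + 1) p)
    (ha' : a' ∈ Finset.Nat.antidiagonalTuple (n' + 1) p)
    (h : ∀ l : Fin n', ((a l.succ : ℕ) : ℝ) = ((a' l.succ : ℕ) : ℝ)) : a = a' := by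
  rw [Finset.Nat.mem_antidiagonalTuple] at ha ha'
  have hsucc : ∀ l : Fin n', a l.succ = a' l.succ := by
    intro l; exact_mod_cast h l
  have h0 : a 0 = a' 0 := by
    rw [Fin.sum_univ_succ] at ha ha'
    have : ∑ l : Fin n', a l.succ = ∑ l : Fin n', a' l.succ :=
      Finset.sum_congr rfl (fun l _ => hsucc l)
    omega
  funext i
  induction i using Fin.cases with
  | zero => exact h0
  | succ l => exact hsucc l

lemma ncard_biUnion {α κ : Type*} (s : Finset κ) (F : κ → Set α)
    (hfin : ∀ k ∈ s, (F k).Finite)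
    (hdisj : ∀ k ∈ s, ∀ k' ∈ s, k ≠ k' → Disjoint (F k) (F k')) :
    (⋃ k ∈ s, F k).ncard = ∑ k ∈ s, (F k).ncard := by
  classical
  induction s using Finset.induction with
  | empty => simp
  | @insert a s ha ih =>
    rw [Finset.set_biUnion_insert, Finset.sum_insert ha]
    have hdis : Disjoint (F a) (⋃ k ∈ s, F k) := by
      rw [Set.disjoint_iUnion₂_right]
      intro k hk
      exact hdisj a (Finset.mem_insert_self _ _) k (Finset.mem_insert_of_mem hk)
        (fun h => ha (h ▸ hk))
    have hf1 : (F a).Finite := hfin a (Finset.mem_insert_self _ _)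
    have hf2 : (⋃ k ∈ s, F k).Finite :=
      Set.Finite.biUnion s.finite_toSet (fun k hk => hfin k (Finset.mem_insert_of_mem hk))
    rw [Set.ncard_union_eq hdis hf1 hf2]
    rw [ih (fun k hk => hfin k (Finset.mem_insert_of_mem hk))
      (fun k hk k' hk' hne => hdisj k (Finset.mem_insert_of_mem hk)
        k' (Finset.mem_insert_of_mem hk') hne)]

end L317

open L317 in
/-- **Lemma 3.17.** For pairs of integer polyhedra `B_{i,j}` with a common support cone
and bounded symmetric differences,
`I(∑ⱼ B_{1,j} * ⋯ * B_{n,j}) = ∑_{a₁+⋯+aₙ=p} I(⋁_{|Jᵢ|=aᵢ} ∑_{i, j∈Jᵢ} B_{i,j})`,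
where `⋁` is the componentwise convex hull of unions over ordered partitions. -/
theorem stmt13 (n' m p : ℕ)
    (B : Fin (n' + 1) → Fin p → Set (Fin m → ℝ) × Set (Fin m → ℝ))
    (Γ : Set (Fin m → ℝ))
    (hB : ∀ i j, IsLatticePolyhedron Γ (B i j).1 ∧ IsLatticePolyhedron Γ (B i j).2 ∧
      Bornology.IsBounded (symmDiff (B i j).1 (B i j).2)) :
    IcountProd (∑ j, prismPair (fun i => B i j)) =
      ∑ a ∈ Finset.Nat.antidiagonalTuple (n' + 1) p,
        Icount
          (convexHull ℝ (⋃ J ∈ {J : Fin (n' + 1) → Finset (Fin p) |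
              (Pairwise fun i i' => Disjoint (J i) (J i')) ∧
              (∀ j₀ : Fin p, ∃ i, j₀ ∈ J i) ∧ (∀ i, (J i).card = a i)},
            ∑ i, ∑ j ∈ J i, (B i j).1),
           convexHull ℝ (⋃ J ∈ {J : Fin (n' + 1) → Finset (Fin p) |
              (Pairwise fun i i' => Disjoint (J i) (J i')) ∧
              (∀ j₀ : Fin p, ∃ i, j₀ ∈ J i) ∧ (∀ i, (J i).card = a i)},
            ∑ i, ∑ j ∈ J i, (B i j).2)) := by
  classical
  -- abbreviations
  set T := Finset.Nat.antidiagonalTuple (n' + 1) p with hT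
  have hconv1 : ∀ i j, Convex ℝ (B i j).1 := fun i j => (ilp_str (hB i j).1).convex
  have hconv2 : ∀ i j, Convex ℝ (B i j).2 := fun i j => (ilp_str (hB i j).2.1).convex
  have hne1 : ∀ i j, ((B i j).1).Nonempty := fun i j => (ilp_str (hB i j).1).nonempty
  have hne2 : ∀ i j, ((B i j).2).Nonempty := fun i j => (ilp_str (hB i j).2.1).nonempty
  set uof : (Fin (n' + 1) → ℕ) → (Fin n' → ℝ) :=
    fun a => fun l => ((a l.succ : ℕ) : ℝ) with huof
  set CH : (Fin (n' + 1) → Fin p → Set (Fin m → ℝ)) → (Fin (n' + 1) → ℕ) →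
      Set (Fin m → ℝ) :=
    fun Δ a => convexHull ℝ (⋃ J ∈ {J : Fin (n' + 1) → Finset (Fin p) |
          (Pairwise fun i i' => Disjoint (J i) (J i')) ∧
          (∀ j₀ : Fin p, ∃ i, j₀ ∈ J i) ∧ (∀ i, (J i).card = a i)},
        ∑ i, ∑ j ∈ J i, Δ i j) with hCH
  have CHdef : ∀ (Δ : Fin (n' + 1) → Fin p → Set (Fin m → ℝ)) (a : Fin (n' + 1) → ℕ),
      CH Δ a = convexHull ℝ (⋃ J ∈ {J : Fin (n' + 1) → Finset (Fin p) |
          (Pairwise fun i i' => Disjoint (J i) (J i')) ∧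
          (∀ j₀ : Fin p, ∃ i, j₀ ∈ J i) ∧ (∀ i, (J i).card = a i)},
        ∑ i, ∑ j ∈ J i, Δ i j) := fun _ _ => rfl
  -- the main fiber decomposition
  have main : ∀ (Δ Δ' : Fin (n' + 1) → Fin p → Set (Fin m → ℝ))
      (hcv : ∀ i j, Convex ℝ (Δ i j)) (hnm : ∀ i j, (Δ i j).Nonempty)
      (hcv' : ∀ i j, Convex ℝ (Δ' i j)) (hnm' : ∀ i j, (Δ' i j).Nonempty),
      ((∑ j : Fin p, prism (fun i => Δ i j)) \ (∑ j : Fin p, prism (fun i => Δ' i j)))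
          ∩ prodLattice n' m
        = ⋃ a ∈ T, (fun v => (uof a, v)) '' ((CH Δ a \ CH Δ' a) ∩ Set.range ι) := by
    intro Δ Δ' hcv hnm hcv' hnm'
    ext z
    constructor
    · rintro ⟨⟨hz1, hz2⟩, ⟨⟨c, hc⟩, ⟨d, hd⟩⟩⟩
      have hz1' : (z.1, z.2) ∈ ∑ j : Fin p, prism (fun i => Δ i j) := by
        rw [Prod.mk.eta]; exact hz1
      obtain ⟨a, haT, hu⟩ := height_exists Δ hcv hnm hz1' c hc
      have ha : ∑ i, a i = p := Finset.Nat.mem_antidiagonalTuple.1 haT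
      have hvA : z.2 ∈ CH Δ a := (slice_iff Δ hcv hnm a ha z.1 hu z.2).1 hz1'
      have hvB : z.2 ∉ CH Δ' a := by
        intro hmem
        apply hz2
        have := (slice_iff Δ' hcv' hnm' a ha z.1 hu z.2).2 hmem
        rwa [Prod.mk.eta] at this
      apply Set.mem_iUnion₂.2
      refine ⟨a, haT, z.2, ⟨⟨hvA, hvB⟩, ⟨d, hd.symm⟩⟩, ?_⟩
      have h1 : uof a = z.1 := by
        funext l
        exact (hu l).symm
      show (uof a, z.2) = z
      rw [h1]
    · intro hz
      obtain ⟨a, haT, hzz⟩ := Set.mem_iUnion₂.1 hz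
      obtain ⟨v, ⟨⟨hvA, hvB⟩, hvlat⟩, rfl⟩ := hzz
      have ha : ∑ i, a i = p := Finset.Nat.mem_antidiagonalTuple.1 haT
      have hu : ∀ l, uof a l = ((a l.succ : ℕ) : ℝ) := fun l => rfl
      refine ⟨⟨(slice_iff Δ hcv hnm a ha (uof a) hu v).2 hvA, ?_⟩, ?_, ?_⟩
      · intro hmem
        exact hvB ((slice_iff Δ' hcv' hnm' a ha (uof a) hu v).1 hmem)
      · exact ⟨fun l => ((a l.succ : ℕ) : ℤ), funext (fun l => by
          show ((a l.succ : ℕ) : ℝ) = (((a l.succ : ℕ) : ℤ) : ℝ)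
          push_cast
          rfl)⟩
      · obtain ⟨d, hd⟩ := hvlat
        exact ⟨d, hd.symm⟩
  -- boundedness of symmetric differences of the slice pairs
  have hbdd : ∀ a ∈ T, Bornology.IsBounded
      (symmDiff (CH (fun i j => (B i j).1) a) (CH (fun i j => (B i j).2) a)) := by
    intro a haT
    have ha : ∑ i, a i = p := Finset.Nat.mem_antidiagonalTuple.1 haT
    by_cases hp : p = 0
    · subst hp
      have hzero : ∀ (Δ : Fin (n' + 1) → Fin 0 → Set (Fin m → ℝ))
          (J : Fin (n' + 1) → Finset (Fin 0)),
          ∑ i, ∑ j ∈ J i, Δ i j = ∑ i : Fin (n' + 1), (0 : Set (Fin m → ℝ)) := by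
        intro Δ J
        apply Finset.sum_congr rfl
        intro i _
        rw [Finset.eq_empty_of_isEmpty (J i), Finset.sum_empty]
      have : CH (fun i j => (B i j).1) a = CH (fun i j => (B i j).2) a := by
        rw [CHdef _ a, CHdef _ a]
        congr 1
        apply Set.iUnion₂_congr
        intro J hJ
        rw [hzero (fun i j => (B i j).1) J, hzero (fun i j => (B i j).2) J]
      rw [this, symmDiff_self]
      show Bornology.IsBounded (∅ : Set (Fin m → ℝ))
      exact Bornology.isBounded_empty
    · -- p > 0
      have hcards : Fintype.card (Fin p) = Fintype.card (Σ i, Fin (a i)) := by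
        rw [Fintype.card_fin, Fintype.card_sigma]
        simp [ha]
      set e : Fin p ≃ (Σ i, Fin (a i)) := Fintype.equivOfCardEq hcards with he
      set J₀ : Fin (n' + 1) → Finset (Fin p) :=
        fun i => Finset.univ.filter (fun j => (e j).1 = i) with hJ₀
      have hJ₀mem : (Pairwise fun i i' => Disjoint (J₀ i) (J₀ i')) ∧
          (∀ j₀ : Fin p, ∃ i, j₀ ∈ J₀ i) ∧ (∀ i, (J₀ i).card = a i) := by
        refine ⟨fun i i' hne => ?_, fun j₀ => ⟨(e j₀).1, by simp [hJ₀]⟩, fun i => ?_⟩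
        · show Disjoint (J₀ i) (J₀ i')
          rw [Finset.disjoint_left]
          intro j hj hj'
          rw [hJ₀] at hj hj'
          simp only [Finset.mem_filter] at hj hj'
          exact hne (hj.2.symm.trans hj'.2)
        · have := card_filter_fiber a e (1 : Equiv.Perm (Fin p)) i
          show (Finset.univ.filter (fun j => (e j).1 = i)).card = a i
          convert this
          rfl
      set SJ : Finset (Fin (n' + 1) → Finset (Fin p)) :=
        Finset.univ.filter (fun J => (Pairwise fun i i' => Disjoint (J i) (J i')) ∧
          (∀ j₀ : Fin p, ∃ i, j₀ ∈ J i) ∧ (∀ i, (J i).card = a i)) with hSJ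
      have hSJne : SJ.Nonempty := ⟨J₀, by
        rw [hSJ, Finset.mem_filter]
        exact ⟨Finset.mem_univ _, hJ₀mem⟩⟩
      have hUrw : ∀ (Δ : Fin (n' + 1) → Fin p → Set (Fin m → ℝ)),
          (⋃ J ∈ {J : Fin (n' + 1) → Finset (Fin p) |
            (Pairwise fun i i' => Disjoint (J i) (J i')) ∧
            (∀ j₀ : Fin p, ∃ i, j₀ ∈ J i) ∧ (∀ i, (J i).card = a i)},
          ∑ i, ∑ j ∈ J i, Δ i j)
          = ⋃ J ∈ SJ, ∑ i, ∑ j ∈ J i, Δ i j := by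
        intro Δ
        ext x
        simp only [Set.mem_iUnion, Set.mem_setOf_eq, hSJ, Finset.mem_filter,
          Finset.mem_univ, true_and]
      have hpair : ∀ J ∈ SJ, GPair Γ (∑ i, ∑ j ∈ J i, (B i j).1)
          (∑ i, ∑ j ∈ J i, (B i j).2) := by
        intro J hJ
        rw [hSJ, Finset.mem_filter] at hJ
        obtain ⟨-, hdisj, hcov, hcard⟩ := hJ
        have hne : (Finset.univ.sigma J).Nonempty := by
          have j₀ : Fin p := ⟨0, Nat.pos_of_ne_zero hp⟩
          obtain ⟨i, hi⟩ := hcov j₀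
          exact ⟨⟨i, j₀⟩, Finset.mem_sigma.2 ⟨Finset.mem_univ _, hi⟩⟩
        have e1 : ∑ i, ∑ j ∈ J i, (B i j).1
            = ∑ x ∈ Finset.univ.sigma J, (B x.1 x.2).1 :=
          (Finset.sum_sigma Finset.univ J (fun x => (B x.1 x.2).1)).symm
        have e2 : ∑ i, ∑ j ∈ J i, (B i j).2
            = ∑ x ∈ Finset.univ.sigma J, (B x.1 x.2).2 :=
          (Finset.sum_sigma Finset.univ J (fun x => (B x.1 x.2).2)).symm
        rw [e1, e2]
        exact GPair.sum _ hne _ _ (fun x _ =>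
          ⟨ilp_str (hB x.1 x.2).1, ilp_str (hB x.1 x.2).2.1, (hB x.1 x.2).2.2⟩)
      have := (GPair.hullBUnion SJ hSJne _ _ hpair).2.2
      rw [CHdef _ a, CHdef _ a]
      rw [hUrw (fun i j => (B i j).1), hUrw (fun i j => (B i j).2)]
      exact this
  -- fiber finiteness
  have hfin1 : ∀ a ∈ T, ((CH (fun i j => (B i j).1) a \ CH (fun i j => (B i j).2) a)
      ∩ Set.range ι).Finite := by
    intro a haT
    apply (lattice_finite (hbdd a haT)).subset
    apply Set.inter_subset_inter_left
    rw [Set.symmDiff_def]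
    exact Set.subset_union_left
  have hfin2 : ∀ a ∈ T, ((CH (fun i j => (B i j).2) a \ CH (fun i j => (B i j).1) a)
      ∩ Set.range ι).Finite := by
    intro a haT
    apply (lattice_finite (hbdd a haT)).subset
    apply Set.inter_subset_inter_left
    rw [Set.symmDiff_def]
    exact Set.subset_union_right
  -- injectivity of the embedding and disjointness of fibers
  have hinj : ∀ a : Fin (n' + 1) → ℕ, Function.Injective (fun v : Fin m → ℝ => (uof a, v)) :=
    fun a v w h => (Prod.ext_iff.1 h).2
  have hdisjfib : ∀ (F : (Fin (n' + 1) → ℕ) → Set (Fin m → ℝ)),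
      ∀ a ∈ T, ∀ a' ∈ T, a ≠ a' →
      Disjoint ((fun v => (uof a, v)) '' F a) ((fun v => (uof a', v)) '' F a') := by
    intro F a haT a' haT' hne
    rw [Set.disjoint_left]
    rintro z ⟨v, _, rfl⟩ ⟨v', _, hz'⟩
    apply hne
    apply height_unique haT haT'
    intro l
    have h1 : uof a' = uof a := congrArg Prod.fst hz'
    have h2 := congrFun h1 l
    exact h2.symm
  -- count each side
  have count1 : (((∑ j : Fin p, prism (fun i => (B i j).1)) \
      (∑ j : Fin p, prism (fun i => (B i j).2))) ∩ prodLattice n' m).ncard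
      = ∑ a ∈ T, ((CH (fun i j => (B i j).1) a \ CH (fun i j => (B i j).2) a)
          ∩ Set.range ι).ncard := by
    rw [main (fun i j => (B i j).1) (fun i j => (B i j).2) hconv1 hne1 hconv2 hne2]
    rw [ncard_biUnion T _ (fun a haT => ((hfin1 a haT).image _))
      (fun a haT a' haT' hne => hdisjfib
        (fun a => (CH (fun i j => (B i j).1) a \ CH (fun i j => (B i j).2) a) ∩ Set.range ι)
        a haT a' haT' hne)]
    apply Finset.sum_congr rfl
    intro a _
    exact Set.ncard_image_of_injective _ (hinj a)
  have count2 : (((∑ j : Fin p, prism (fun i => (B i j).2)) \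
      (∑ j : Fin p, prism (fun i => (B i j).1))) ∩ prodLattice n' m).ncard
      = ∑ a ∈ T, ((CH (fun i j => (B i j).2) a \ CH (fun i j => (B i j).1) a)
          ∩ Set.range ι).ncard := by
    rw [main (fun i j => (B i j).2) (fun i j => (B i j).1) hconv2 hne2 hconv1 hne1]
    rw [ncard_biUnion T _ (fun a haT => ((hfin2 a haT).image _))
      (fun a haT a' haT' hne => hdisjfib
        (fun a => (CH (fun i j => (B i j).2) a \ CH (fun i j => (B i j).1) a) ∩ Set.range ι)
        a haT a' haT' hne)]
    apply Finset.sum_congr rfl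
    intro a _
    exact Set.ncard_image_of_injective _ (hinj a)
  -- final assembly
  have hfst : (∑ j, prismPair (fun i => B i j)).1 = ∑ j : Fin p, prism (fun i => (B i j).1) := by
    rw [Prod.fst_sum]
    rfl
  have hsnd : (∑ j, prismPair (fun i => B i j)).2 = ∑ j : Fin p, prism (fun i => (B i j).2) := by
    rw [Prod.snd_sum]
    rfl
  have hexp : IcountProd (∑ j, prismPair (fun i => B i j)) =
      ((((∑ j : Fin p, prism (fun i => (B i j).1)) \ (∑ j : Fin p, prism (fun i => (B i j).2)))
        ∩ prodLattice n' m).ncard : ℤ)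
      - ((((∑ j : Fin p, prism (fun i => (B i j).2)) \ (∑ j : Fin p, prism (fun i => (B i j).1)))
        ∩ prodLattice n' m).ncard : ℤ) := by
    unfold IcountProd
    rw [hfst, hsnd]
  rw [hexp, count1, count2]
  rw [Nat.cast_sum, Nat.cast_sum, ← Finset.sum_sub_distrib]
  apply Finset.sum_congr rfl
  intro a _
  rfl
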